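/- Let λ < 0, A ≥ 0, and δ : (-∞, 0] → [0, ∞) a continuous function with δ(τ) ≤ A e^{-λτ} for all τ ≤ 0 (so δ(τ) → 0 as τ → -∞ and δ is integrable on (-∞, 0]). Let f : (-∞, 0] → ℝ be C¹ with |f'(τ) + λ f(τ)| ≤ δ(τ) |f(τ)| for all τ ≤ 0 and f not identically zero. Then f has no zeros, the limit α := lim_{τ → -∞} e^{λτ} f(τ) exists in ℝ \ {0}, and moreover |e^{λτ} f(τ) - α| ≤ C(A, λ) · |α| · e^{-λτ} for all τ ≤ 0. -/

import Mathlib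

open Real Set Filter Topology

lemma exp_sub_one_abs_le (u : ℝ) : |Real.exp u - 1| ≤ |u| * Real.exp |u| := by
  rcases le_or_gt 0 u with h | h
  · rw [abs_of_nonneg (by linarith [Real.one_le_exp h] : (0:ℝ) ≤ Real.exp u - 1),
      abs_of_nonneg h]
    have h1 : 1 - u ≤ Real.exp (-u) := by linarith [Real.add_one_le_exp (-u)]
    have h2 : Real.exp (-u) * Real.exp u = 1 := by rw [← Real.exp_add]; simp
    nlinarith [Real.exp_pos u]
  · have he : Real.exp u < 1 := by
      calc Real.exp u < Real.exp 0 := Real.exp_lt_exp.2 h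
      _ = 1 := Real.exp_zero
    rw [abs_of_nonpos (by linarith), abs_of_neg h]
    have h1 : u + 1 ≤ Real.exp u := Real.add_one_le_exp u
    have h2 : 1 ≤ Real.exp (-u) := Real.one_le_exp (by linarith)
    nlinarith

lemma mono_aux {u u' : ℝ → ℝ} (hu : ∀ τ ≤ (0:ℝ), HasDerivAt u (u' τ) τ)
    (h0 : ∀ τ ≤ (0:ℝ), 0 ≤ u' τ) : MonotoneOn u (Set.Iic 0) := by
  apply monotoneOn_of_deriv_nonneg (convex_Iic 0)
  · exact fun τ hτ => (hu τ hτ).continuousAt.continuousWithinAt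
  · intro τ hτ
    rw [interior_Iic] at hτ
    exact (hu τ hτ.le).differentiableAt.differentiableWithinAt
  · intro τ hτ
    rw [interior_Iic] at hτ
    rw [(hu τ hτ.le).deriv]
    exact h0 τ hτ.le

/-- Quantitative convergence of the dominant eigenmode: if `f` is `C¹` on `(-∞,0]`,
not identically zero, and `|f' + λ f| ≤ δ(τ) |f|` with `λ < 0` and
`δ(τ) ≤ A e^{-λτ}`, then `f` never vanishes, `e^{λτ} f(τ)` converges as `τ → -∞`
to a nonzero limit `α`, with rate `|e^{λτ} f(τ) - α| ≤ C(A,λ) |α| e^{-λτ}`. -/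
theorem stmt15 (lam A : ℝ) (hlam : lam < 0) (hA : 0 ≤ A)
    (δ : ℝ → ℝ) (hδcont : ContinuousOn δ (Set.Iic 0))
    (hδ0 : ∀ τ ≤ (0:ℝ), 0 ≤ δ τ)
    (hδbd : ∀ τ ≤ (0:ℝ), δ τ ≤ A * Real.exp (-lam * τ))
    (f f' : ℝ → ℝ)
    (hd : ∀ τ ≤ (0:ℝ), HasDerivAt f (f' τ) τ)
    (hf'cont : ContinuousOn f' (Set.Iic 0))
    (hineq : ∀ τ ≤ (0:ℝ), |f' τ + lam * f τ| ≤ δ τ * |f τ|)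
    (hne : ∃ τ ≤ (0:ℝ), f τ ≠ 0) :
    (∀ τ ≤ (0:ℝ), f τ ≠ 0) ∧
    ∃ α : ℝ, α ≠ 0 ∧
      Filter.Tendsto (fun τ => Real.exp (lam * τ) * f τ) Filter.atBot (nhds α) ∧
      ∃ C : ℝ, 0 < C ∧ ∀ τ ≤ (0:ℝ),
        |Real.exp (lam * τ) * f τ - α| ≤ C * |α| * Real.exp (-lam * τ) := by
  have hB : (0:ℝ) < -lam := by linarith
  have hfc : ContinuousOn f (Set.Iic 0) :=
    fun τ hτ => (hd τ hτ).continuousAt.continuousWithinAt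
  have hδA : ∀ τ ≤ (0:ℝ), δ τ ≤ A := by
    intro τ hτ
    have he : Real.exp (-lam * τ) ≤ 1 := Real.exp_le_one_iff.2 (by nlinarith)
    calc δ τ ≤ A * Real.exp (-lam * τ) := hδbd τ hτ
    _ ≤ A * 1 := by nlinarith
    _ = A := mul_one A
  -- Step 1: f never vanishes
  have hfne : ∀ τ ≤ (0:ℝ), f τ ≠ 0 := by
    intro τ0 hτ0 h0
    obtain ⟨τ1, hτ1, hf1⟩ := hne
    set K := A + (-lam) with hK
    have hbd : ∀ x ≤ (0:ℝ), |f' x| ≤ K * |f x| := by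
      intro x hx
      have h1 := hineq x hx
      have h2 := hδA x hx
      have h3 : |lam * f x| = (-lam) * |f x| := by
        rw [abs_mul, abs_of_neg hlam]
      have h4 : |f' x| ≤ |f' x + lam * f x| + |lam * f x| := by
        calc |f' x| = |(f' x + lam * f x) + (-(lam * f x))| := by ring_nf
        _ ≤ |f' x + lam * f x| + |-(lam * f x)| := abs_add_le _ _
        _ = |f' x + lam * f x| + |lam * f x| := by rw [abs_neg]
      have h5 : 0 ≤ |f x| := abs_nonneg _
      nlinarith
    apply hf1
    rcases le_total τ0 τ1 with hle | hle
    · have hsub : Set.Icc τ0 τ1 ⊆ Set.Iic 0 := fun x hx => le_trans hx.2 hτ1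
      have hg := norm_le_gronwallBound_of_norm_deriv_right_le (f := f) (f' := f')
        (δ := 0) (K := K) (ε := 0) (a := τ0) (b := τ1)
        (hfc.mono hsub)
        (fun x hx => (hd x (le_trans hx.2.le hτ1)).hasDerivWithinAt)
        (by simp [Real.norm_eq_abs, h0])
        (fun x hx => by
          simpa [Real.norm_eq_abs] using hbd x (le_trans hx.2.le hτ1))
      have := hg τ1 ⟨hle, le_rfl⟩
      rw [gronwallBound_ε0_δ0] at this
      simpa [Real.norm_eq_abs, abs_nonpos_iff] using this
    · set g : ℝ → ℝ := fun t => f (-t) with hgdef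
      have hdg : ∀ t, -t ≤ 0 → HasDerivAt g (f' (-t) * (-1)) t := by
        intro t ht
        exact (hd (-t) ht).comp t (hasDerivAt_neg t)
      have hsub : ∀ x ∈ Set.Icc (-τ0) (-τ1), -x ≤ (0:ℝ) := by
        intro x hx
        have := hx.1
        linarith [hτ0]
      have hg := norm_le_gronwallBound_of_norm_deriv_right_le (f := g)
        (f' := fun t => f' (-t) * (-1))
        (δ := 0) (K := K) (ε := 0) (a := -τ0) (b := -τ1)
        (fun x hx => ((hdg x (hsub x hx)).continuousAt).continuousWithinAt)
        (fun x hx => (hdg x (hsub x ⟨hx.1, hx.2.le⟩)).hasDerivWithinAt)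
        (by simp [hgdef, Real.norm_eq_abs, h0])
        (fun x hx => by
          have := hbd (-x) (hsub x ⟨hx.1, hx.2.le⟩)
          simp only [Real.norm_eq_abs, hgdef]
          rw [abs_mul]
          simpa using this)
      have := hg (-τ1) ⟨by linarith, le_rfl⟩
      rw [gronwallBound_ε0_δ0] at this
      simpa [hgdef, Real.norm_eq_abs, abs_nonpos_iff] using this
  -- Step 2: constant sign
  set s : ℝ := if 0 < f 0 then 1 else -1 with hs
  have hs1 : s = 1 ∨ s = -1 := by
    by_cases h : 0 < f 0 <;> simp [hs, h]
  have hsabs : |s| = 1 := by rcases hs1 with h | h <;> simp [h]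
  have hsfx : ∀ τ ≤ (0:ℝ), f τ = s * |f τ| := by
    intro τ hτ
    have key : 0 < f τ * f 0 := by
      rcases lt_or_ge 0 (f τ * f 0) with h | h
      · exact h
      · exfalso
        have hsub : Set.uIcc τ 0 ⊆ Set.Iic 0 := by
          rw [Set.uIcc_of_le hτ]; exact fun x hx => hx.2
        have h0m : (0:ℝ) ∈ Set.uIcc (f τ) (f 0) := by
          rw [Set.mem_uIcc]
          rcases mul_nonpos_iff.1 h with ⟨h1, h2⟩ | ⟨h1, h2⟩
          · exact Or.inr ⟨h2, h1⟩
          · exact Or.inl ⟨h1, h2⟩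
        obtain ⟨c, hc, hfc0⟩ := intermediate_value_uIcc (hfc.mono hsub) h0m
        exact hfne c (hsub hc) hfc0
    rcases lt_or_ge 0 (f 0) with hp | hp
    · have hpos : 0 < f τ := by nlinarith
      rw [hs, if_pos hp, one_mul, abs_of_pos hpos]
    · have hp' : f 0 < 0 := hp.lt_of_ne (hfne 0 le_rfl)
      have hneg : f τ < 0 := by nlinarith
      rw [hs, if_neg (not_lt.2 hp), abs_of_neg hneg]; ring
  -- Step 3: define ψ = lam τ + log f τ with derivative bounded by δ
  set ψ : ℝ → ℝ := fun τ => lam * τ + Real.log (f τ) with hψdef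
  set ψ' : ℝ → ℝ := fun τ => lam + (f τ)⁻¹ * f' τ with hψ'def
  have hdψ : ∀ τ ≤ (0:ℝ), HasDerivAt ψ (ψ' τ) τ := by
    intro τ hτ
    have hlog : HasDerivAt (fun x => Real.log (f x)) ((f τ)⁻¹ * f' τ) τ :=
      (Real.hasDerivAt_log (hfne τ hτ)).comp τ (hd τ hτ)
    have := ((hasDerivAt_id τ).const_mul lam).add hlog
    simpa [hψdef, hψ'def, mul_comm, Pi.add_def] using this
  have hψbd : ∀ τ ≤ (0:ℝ), |ψ' τ| ≤ δ τ := by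
    intro τ hτ
    have hne' := hfne τ hτ
    have habs : (0:ℝ) < |f τ| := abs_pos.2 hne'
    have heq : ψ' τ = (f' τ + lam * f τ) / f τ := by
      simp only [hψ'def]; rw [add_div, mul_div_cancel_right₀ _ hne']; ring
    rw [heq, abs_div, div_le_iff₀ habs]
    exact hineq τ hτ
  -- Step 4: comparison function φ
  set φ : ℝ → ℝ := fun τ => (A / (-lam)) * Real.exp (-lam * τ) with hφdef
  have hdφ : ∀ τ : ℝ, HasDerivAt φ (A * Real.exp (-lam * τ)) τ := by
    intro τ
    have h1 : HasDerivAt (fun x : ℝ => Real.exp (-lam * x))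
        (Real.exp (-lam * τ) * (-lam * 1)) τ :=
      ((hasDerivAt_id τ).const_mul (-lam)).exp
    have := h1.const_mul (A / (-lam))
    convert this using 1
    have hlne : lam ≠ 0 := hlam.ne
    all_goals first
      | rfl
      | (have hc : A / (-lam) * (-lam) = A := by
            rw [div_mul_eq_mul_div, mul_div_assoc, div_self (neg_ne_zero.2 hlam.ne), mul_one]
         linear_combination (-(Real.exp (-lam * τ))) * hc)
  have hφnonneg : ∀ τ, 0 ≤ φ τ := by
    intro τ
    have := Real.exp_pos (-lam * τ)
    have : (0:ℝ) ≤ A / (-lam) := by positivity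
    positivity
  -- monotone functions φ ± ψ
  have m1 : MonotoneOn (fun t => φ t - ψ t) (Set.Iic 0) := by
    apply mono_aux (u' := fun t => A * Real.exp (-lam * t) - ψ' t)
      (fun t ht => (hdφ t).sub (hdψ t ht))
    intro t ht
    have h1 := (abs_le.1 (hψbd t ht)).2
    have h2 := hδbd t ht
    linarith
  have m2 : MonotoneOn (fun t => φ t + ψ t) (Set.Iic 0) := by
    apply mono_aux (u' := fun t => A * Real.exp (-lam * t) + ψ' t)
      (fun t ht => (hdφ t).add (hdψ t ht))
    intro t ht
    have h1 := (abs_le.1 (hψbd t ht)).1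
    have h2 := hδbd t ht
    linarith
  have hkey : ∀ σ τ : ℝ, σ ≤ τ → τ ≤ 0 → |ψ τ - ψ σ| ≤ φ τ - φ σ := by
    intro σ τ hστ hτ0
    have hσ0 : σ ≤ 0 := le_trans hστ hτ0
    have e1 := m1 (Set.mem_Iic.2 hσ0) (Set.mem_Iic.2 hτ0) hστ
    have e2 := m2 (Set.mem_Iic.2 hσ0) (Set.mem_Iic.2 hτ0) hστ
    simp only at e1 e2
    rw [abs_le]
    constructor <;> linarith
  -- Step 5: limit L of ψ at -∞
  have hφ0 : Tendsto φ atBot (𝓝 0) := by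
    have h1 : Tendsto (fun τ : ℝ => -lam * τ) atBot atBot :=
      (tendsto_const_mul_atBot_of_pos hB).2 tendsto_id
    have h2 : Tendsto (fun τ : ℝ => Real.exp (-lam * τ)) atBot (𝓝 0) :=
      Real.tendsto_exp_atBot.comp h1
    have := h2.const_mul (A / (-lam))
    simpa [hφdef] using this
  set H : ℝ → ℝ := fun τ => φ (min τ 0) + ψ (min τ 0) with hH
  have hHmono : Monotone H := by
    intro a b hab
    exact m2 (Set.mem_Iic.2 (min_le_right a 0)) (Set.mem_Iic.2 (min_le_right b 0))
      (min_le_min hab le_rfl)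
  have hHbdd : BddBelow (Set.range H) := by
    refine ⟨ψ 0 - φ 0, ?_⟩
    rintro x ⟨τ, rfl⟩
    have hm : min τ 0 ≤ 0 := min_le_right τ 0
    have h1 := (abs_le.1 (hkey (min τ 0) 0 hm le_rfl)).2
    have h2 := hφnonneg (min τ 0)
    simp only [hH]
    linarith
  have hHlim := tendsto_atBot_ciInf hHmono hHbdd
  set L : ℝ := ⨅ τ, H τ with hL
  have hφmin : Tendsto (fun τ => φ (min τ 0)) atBot (𝓝 0) := by
    apply hφ0.congr'
    filter_upwards [Filter.eventually_le_atBot (0:ℝ)] with τ hτ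
    rw [min_eq_left hτ]
  have hψlim : Tendsto (fun τ => ψ (min τ 0)) atBot (𝓝 L) := by
    have := hHlim.sub hφmin
    simp only [hH, add_sub_cancel_left, sub_zero] at this
    exact this
  set α : ℝ := s * Real.exp L with hα
  have hαne : α ≠ 0 := by
    rcases hs1 with h | h <;> simp [hα, h, Real.exp_ne_zero]
  have hgs : ∀ τ ≤ (0:ℝ), Real.exp (lam * τ) * f τ = s * Real.exp (ψ τ) := by
    intro τ hτ
    have h1 : Real.exp (Real.log (f τ)) = |f τ| := by
      rw [← Real.log_abs, Real.exp_log (abs_pos.2 (hfne τ hτ))]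
    have h2 : ψ τ = lam * τ + Real.log (f τ) := rfl
    rw [h2, Real.exp_add, h1]
    conv_lhs => rw [hsfx τ hτ]
    ring
  refine ⟨hfne, α, hαne, ?_, ?_⟩
  · have h1 : Tendsto (fun τ => s * Real.exp (ψ (min τ 0))) atBot (𝓝 (s * Real.exp L)) :=
      ((Real.continuous_exp.tendsto L).comp hψlim).const_mul s
    apply h1.congr'
    filter_upwards [Filter.eventually_le_atBot (0:ℝ)] with τ hτ
    rw [min_eq_left hτ, hgs τ hτ]
  · refine ⟨(A / (-lam)) * Real.exp (A / (-lam)) + 1, by positivity, ?_⟩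
    intro τ hτ
    have hdist : |ψ τ - L| ≤ φ τ := by
      have htend : Tendsto (fun σ => |ψ τ - ψ (min σ 0)|) atBot (𝓝 |ψ τ - L|) :=
        (tendsto_const_nhds.sub hψlim).abs
      apply le_of_tendsto htend
      filter_upwards [Filter.eventually_le_atBot (min τ 0)] with σ hσ
      have hστ : σ ≤ τ := le_trans hσ (min_le_left _ _)
      have hσ0 : σ ≤ 0 := le_trans hσ (min_le_right _ _)
      rw [min_eq_left hσ0]
      calc |ψ τ - ψ σ| ≤ φ τ - φ σ := hkey σ τ hστ hτ
      _ ≤ φ τ := by linarith [hφnonneg σ]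
    have hφτle : φ τ ≤ A / (-lam) := by
      have he : Real.exp (-lam * τ) ≤ 1 := Real.exp_le_one_iff.2 (by nlinarith)
      have hAB : (0:ℝ) ≤ A / (-lam) := by positivity
      calc φ τ = (A / (-lam)) * Real.exp (-lam * τ) := rfl
      _ ≤ (A / (-lam)) * 1 := mul_le_mul_of_nonneg_left he hAB
      _ = A / (-lam) := mul_one _
    rw [hgs τ hτ, hα]
    have hsplit : Real.exp (ψ τ) = Real.exp L * Real.exp (ψ τ - L) := by
      rw [← Real.exp_add]; ring_nf
    have heq : s * Real.exp (ψ τ) - s * Real.exp L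
        = s * (Real.exp L * (Real.exp (ψ τ - L) - 1)) := by
      rw [hsplit]; ring
    rw [heq, abs_mul, hsabs, one_mul, abs_mul, abs_of_pos (Real.exp_pos L)]
    have hαabs : |s * Real.exp L| = Real.exp L := by
      rw [abs_mul, hsabs, one_mul, abs_of_pos (Real.exp_pos L)]
    rw [hαabs]
    have h1 := exp_sub_one_abs_le (ψ τ - L)
    have h2 : |ψ τ - L| * Real.exp |ψ τ - L| ≤ φ τ * Real.exp (A / (-lam)) := by
      apply mul_le_mul hdist (Real.exp_le_exp.2 (le_trans hdist hφτle))
        (Real.exp_pos _).le (le_trans (abs_nonneg _) hdist)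
    have h3 : |Real.exp (ψ τ - L) - 1| ≤ φ τ * Real.exp (A / (-lam)) := le_trans h1 h2
    have e1 : (0:ℝ) < Real.exp L := Real.exp_pos L
    have e2 : (0:ℝ) < Real.exp (-lam * τ) := Real.exp_pos _
    have hφval : φ τ = (A / (-lam)) * Real.exp (-lam * τ) := rfl
    calc Real.exp L * |Real.exp (ψ τ - L) - 1|
        ≤ Real.exp L * (φ τ * Real.exp (A / (-lam))) :=
          mul_le_mul_of_nonneg_left h3 e1.le
    _ ≤ ((A / (-lam)) * Real.exp (A / (-lam)) + 1) * Real.exp L * Real.exp (-lam * τ) := by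
        rw [hφval]; nlinarith
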